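/- Over S = k[x_1,...,x_n], let M be a squarefree module and define its Alexander dual A(M) by A(M)_R = Hom_k(M_{R^c}, k) for R ⊆ [n], with multiplication by x_v (for v ∉ R) given by the dual of multiplication M_{(R∪{v})^c} → M_{R^c} by x_v. Then A(A(M)) is naturally isomorphic to M, i.e., Alexander duality is an involution on squarefree modules. -/

import Mathlib

/-- A (combinatorial model of a) squarefree module over `S = k[x_1,...,x_n]`:
a squarefree module is determined, up to isomorphism, by its graded pieces `M_R`
for `R ⊆ [n]` (finite-dimensional `k`-vector spaces) together with the
multiplication maps `x_v : M_R → M_{R ∪ {v}}` for `v ∉ R`. -/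
structure SqFreeData (k : Type) [Field k] (n : ℕ) where
  /-- the graded piece `M_R` -/
  piece : Finset (Fin n) → Type
  [addCommGroup : ∀ R, AddCommGroup (piece R)]
  [module : ∀ R, Module k (piece R)]
  [finiteDimensional : ∀ R, FiniteDimensional k (piece R)]
  /-- multiplication by `x_v : M_R → M_{R ∪ {v}}` for `v ∉ R` -/
  mul : ∀ (R : Finset (Fin n)) (v : Fin n), v ∉ R → (piece R →ₗ[k] piece (insert v R))

attribute [instance] SqFreeData.addCommGroup SqFreeData.module SqFreeData.finiteDimensional

/-- Transport of a graded piece along an equality of index sets. -/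
def SqFreeData.castEquiv {k : Type} [Field k] {n : ℕ} (M : SqFreeData k n)
    {R S : Finset (Fin n)} (h : R = S) : M.piece R ≃ₗ[k] M.piece S :=
  h ▸ LinearEquiv.refl k (M.piece R)

/-- **The Alexander dual** `A(M)`: its piece at `R` is `Hom_k(M_{Rᶜ}, k)`, and for
`v ∉ R` the multiplication `A(M)_R → A(M)_{R ∪ {v}}` is the dual of the
multiplication `M_{(R ∪ {v})ᶜ} → M_{Rᶜ}` by `x_v` (note `Rᶜ = (R ∪ {v})ᶜ ∪ {v}`). -/
noncomputable def SqFreeData.alexanderDual {k : Type} [Field k] {n : ℕ}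
    (M : SqFreeData k n) : SqFreeData k n where
  piece R := Module.Dual k (M.piece Rᶜ)
  addCommGroup R := inferInstance
  module R := inferInstance
  finiteDimensional R := inferInstance
  mul R v hv :=
    (((M.castEquiv (show insert v ((insert v R)ᶜ) = Rᶜ by
          ext w; by_cases hw : w = v <;> simp [hw, hv])).toLinearMap.comp
        (M.mul ((insert v R)ᶜ) v (by simp))) :
          M.piece ((insert v R)ᶜ) →ₗ[k] M.piece Rᶜ).dualMap

namespace SqFreeData
variable {k : Type} [Field k] {n : ℕ} (M : SqFreeData k n)

lemma castEquiv_symm {R S : Finset (Fin n)} (h : R = S) :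
    (M.castEquiv h).symm = M.castEquiv h.symm := by subst h; rfl

lemma castEquiv_castEquiv_apply {R S T : Finset (Fin n)} (h : R = S) (h' : S = T)
    (x : M.piece R) : M.castEquiv h' (M.castEquiv h x) = M.castEquiv (h.trans h') x := by
  subst h; subst h'; rfl

lemma mul_castEquiv_apply {R S : Finset (Fin n)} (h : R = S) (v : Fin n)
    (hv : v ∉ R) (hv' : v ∉ S) (x : M.piece R) :
    M.mul S v hv' (M.castEquiv h x)
      = M.castEquiv (congrArg (insert v) h) (M.mul R v hv x) := by
  subst h; rfl

lemma dual_castEquiv {R S : Finset (Fin n)} (h : R = S) :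
    (M.alexanderDual.castEquiv h).toLinearMap
      = ((M.castEquiv (congrArg compl h)).symm.toLinearMap).dualMap := by
  subst h; rfl

end SqFreeData

/-- **Alexander duality is an involution on squarefree modules**: `A(A(M))` is
naturally isomorphic to `M`, via isomorphisms of the graded pieces commuting with the
multiplication maps by the variables. -/


theorem alexanderDual_involutive (k : Type) [Field k] (n : ℕ) (M : SqFreeData k n) :
    ∃ e : ∀ R : Finset (Fin n), (M.alexanderDual.alexanderDual.piece R) ≃ₗ[k] M.piece R,
      ∀ (R : Finset (Fin n)) (v : Fin n) (hv : v ∉ R),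
        (e (insert v R)).toLinearMap.comp (M.alexanderDual.alexanderDual.mul R v hv) =
          (M.mul R v hv).comp (e R).toLinearMap := by
  refine ⟨fun R => (Module.evalEquiv k (M.piece Rᶜᶜ)).symm.trans (M.castEquiv (compl_compl R)),
    fun R v hv => ?_⟩
  have hvcc : v ∉ Rᶜᶜ := by simpa using hv
  have hS : v ∉ (insert v R)ᶜ := by simp
  have hX : v ∉ (insert v ((insert v R)ᶜ))ᶜ := by simp
  have h₁ : insert v ((insert v R)ᶜ) = Rᶜ := by
    ext w; by_cases hw : w = v <;> simp [hw, hv]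
  have h₂ : insert v ((insert v ((insert v R)ᶜ))ᶜ) = (insert v R)ᶜᶜ := by
    ext w; by_cases hw : w = v <;> simp [hw, hS]
  have e1 : M.alexanderDual.alexanderDual.mul R v hv
      = ((M.alexanderDual.castEquiv h₁).toLinearMap.comp
          (M.alexanderDual.mul ((insert v R)ᶜ) v hS)).dualMap := rfl
  have e2 : M.alexanderDual.mul ((insert v R)ᶜ) v hS
      = (((M.castEquiv h₂).toLinearMap).comp
          (M.mul ((insert v ((insert v R)ᶜ))ᶜ) v hX)).dualMap := rfl
  have key : M.alexanderDual.alexanderDual.mul R v hv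
      = ((((M.castEquiv h₂).toLinearMap).comp
            ((M.mul ((insert v ((insert v R)ᶜ))ᶜ) v hX).comp
              (M.castEquiv (congrArg compl h₁)).symm.toLinearMap))).dualMap.dualMap := by
    rw [e1, e2, SqFreeData.dual_castEquiv]
    rfl
  rw [key, ← Module.Dual.eval_comp_comp_evalEquiv_eq]
  apply LinearMap.ext
  intro Φ
  show (M.castEquiv (compl_compl (insert v R)))
      ((Module.evalEquiv k (M.piece (insert v R)ᶜᶜ)).symm
        ((Module.evalEquiv k (M.piece (insert v R)ᶜᶜ))
          ((M.castEquiv h₂)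
            ((M.mul ((insert v ((insert v R)ᶜ))ᶜ) v hX)
              ((M.castEquiv (congrArg compl h₁)).symm
                ((Module.evalEquiv k (M.piece Rᶜᶜ)).symm Φ)))))) =
    (M.mul R v hv) ((M.castEquiv (compl_compl R))
      ((Module.evalEquiv k (M.piece Rᶜᶜ)).symm Φ))
  rw [LinearEquiv.symm_apply_apply, M.castEquiv_symm,
    M.mul_castEquiv_apply (congrArg compl h₁).symm v hvcc hX,
    M.castEquiv_castEquiv_apply, M.castEquiv_castEquiv_apply,
    M.mul_castEquiv_apply (compl_compl R) v hvcc hv]
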